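/- Let k be a field, let (L, K, M) be a field correspondence over k, let Ω be an algebraically closed field extension of k of transcendence degree 1, and fix a k-algebra embedding PQ : M → Ω with restrictions P = PQ|_L and Q = PQ|_K. Let E_∞ ⊆ Ω be the minimal subfield of Ω containing PQ(M) that is Galois over both P(L) and Q(K) (the union of the alternating tower of Galois closures). Suppose τ is a k-algebra automorphism of M with τ ∘ τ = id and τ(L) = K (hence τ(K) = L). Then there exists a k-algebra automorphism σ of E_∞ such that σ(PQ(x)) = PQ(τ(x)) for all x ∈ M. -/

import Mathlib

open scoped IntermediateField

/-- A field extension `F/k` has transcendence degree one iff some single element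
forms a transcendence basis of `F` over `k`. -/
def HasTrdegOne (k F : Type*) [Field k] [Field F] [Algebra k F] : Prop :=
  ∃ x : F, IsTranscendenceBasis k (fun _ : Unit => x)

/-- The Galois (= normal) closure inside `Ω` of the subfield `F` over the subfield `B`. -/
noncomputable def galoisClosureOver {k Ω : Type*} [Field k] [Field Ω] [Algebra k Ω]
    (B F : IntermediateField k Ω) : IntermediateField k Ω :=
  ⨆ σ : {σ : Ω →ₐ[k] Ω // ∀ x ∈ B, σ x = x}, F.map σ.1

/-- The alternating tower of Galois closures over `B₁`, `B₂` starting from `F₀`. -/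
noncomputable def altTower {k Ω : Type*} [Field k] [Field Ω] [Algebra k Ω]
    (B₁ B₂ F₀ : IntermediateField k Ω) : ℕ → IntermediateField k Ω
  | 0 => F₀
  | n + 1 => galoisClosureOver (if n % 2 = 0 then B₁ else B₂) (altTower B₁ B₂ F₀ n)

/-- `E_∞`: the union of the alternating tower of Galois closures, the minimal subfield of
`Ω` containing `PQ(M)` that is Galois over both `P(L)` and `Q(K)`. -/
noncomputable def Einfty {k M Ω : Type*} [Field k] [Field M] [Algebra k M]
    [Field Ω] [Algebra k Ω] (L K : IntermediateField k M) (PQ : M →ₐ[k] Ω) :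
    IntermediateField k Ω :=
  ⨆ n : ℕ, altTower (PQ.comp K.val).fieldRange (PQ.comp L.val).fieldRange
    PQ.fieldRange (n + 1)

theorem isAlgebraic_of_ringHom_comp' {S T Z : Type*} [CommRing S] [CommRing T] [CommRing Z]
    [Algebra S Z] [Algebra T Z] (f : S →+* T) (hf : Function.Injective f)
    (hcomp : (algebraMap T Z).comp f = algebraMap S Z) {z : Z}
    (h : IsAlgebraic S z) : IsAlgebraic T z := by
  obtain ⟨p, hp, hz⟩ := h
  refine ⟨p.map f, fun h0 => hp (Polynomial.map_injective f hf (by rw [h0, Polynomial.map_zero])),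
    ?_⟩
  rw [Polynomial.aeval_def, Polynomial.eval₂_map, hcomp, ← Polynomial.aeval_def]
  exact hz

theorem isAlg_mono_field' {k₁ k₂ Ω : Type*} [Field k₁] [Field k₂] [Field Ω]
    [Algebra k₁ Ω] [Algebra k₂ Ω] (E : IntermediateField k₁ Ω) (F : IntermediateField k₂ Ω)
    (h : ∀ z ∈ E, z ∈ F) {t : Ω} (ht : IsAlgebraic E t) : IsAlgebraic F t := by
  refine isAlgebraic_of_ringHom_comp' (Z := Ω)
    { toFun := fun s => (⟨s.1, h s.1 s.2⟩ : F)
      map_one' := rfl, map_mul' := fun _ _ => rfl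
      map_zero' := rfl, map_add' := fun _ _ => rfl } ?_ ?_ ht
  · intro a b hab
    exact Subtype.ext (congrArg Subtype.val hab : (_ : Ω) = _)
  · rfl

theorem isAlg_subalg_field' {k Ω : Type*} [Field k] [Field Ω] [Algebra k Ω]
    (A : Subalgebra k Ω) (F : IntermediateField k Ω)
    (h : ∀ z ∈ A, z ∈ F) {t : Ω} (ht : IsAlgebraic A t) : IsAlgebraic F t := by
  refine isAlgebraic_of_ringHom_comp' (Z := Ω)
    { toFun := fun s => (⟨s.1, h s.1 s.2⟩ : F)
      map_one' := rfl, map_mul' := fun _ _ => rfl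
      map_zero' := rfl, map_add' := fun _ _ => rfl } ?_ ?_ ht
  · intro a b hab
    exact Subtype.ext (congrArg Subtype.val hab : (_ : Ω) = _)
  · rfl

section TowerLemmas

variable {k Ω : Type*} [Field k] [Field Ω] [Algebra k Ω]

theorem le_galoisClosureOver' (B F : IntermediateField k Ω) : F ≤ galoisClosureOver B F := by
  have h := le_iSup (fun σ : {σ : Ω →ₐ[k] Ω // ∀ x ∈ B, σ x = x} => F.map σ.1)
    ⟨AlgHom.id k Ω, fun x _ => rfl⟩
  rw [galoisClosureOver]
  intro z hz
  exact h ⟨z, hz, rfl⟩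

theorem galoisClosureOver_mono' (B : IntermediateField k Ω) {F F' : IntermediateField k Ω}
    (h : F ≤ F') : galoisClosureOver B F ≤ galoisClosureOver B F' :=
  iSup_le fun σ => le_iSup_of_le σ (IntermediateField.map_mono σ.1 h)

theorem altTower_swap_le' (B₁ B₂ F₀ : IntermediateField k Ω) :
    ∀ n, altTower B₂ B₁ F₀ n ≤ altTower B₁ B₂ F₀ (n + 1) := by
  intro n
  induction n with
  | zero => exact le_galoisClosureOver' _ _
  | succ n ih =>
    have hmod : (if (n + 1) % 2 = 0 then B₁ else B₂) = if n % 2 = 0 then B₂ else B₁ := by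
      by_cases h : n % 2 = 0
      · have h2 : (n + 1) % 2 ≠ 0 := by omega
        simp [h, h2]
      · have h2 : (n + 1) % 2 = 0 := by omega
        simp [h, h2]
    calc altTower B₂ B₁ F₀ (n + 1)
        = galoisClosureOver (if n % 2 = 0 then B₂ else B₁) (altTower B₂ B₁ F₀ n) := by
          rw [altTower]
      _ ≤ galoisClosureOver (if n % 2 = 0 then B₂ else B₁) (altTower B₁ B₂ F₀ (n + 1)) :=
          galoisClosureOver_mono' _ ih
      _ = altTower B₁ B₂ F₀ (n + 2) := by
          conv_rhs => rw [altTower]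
          rw [hmod]

theorem map_galoisClosureOver' (φ : Ω ≃ₐ[k] Ω) (B F : IntermediateField k Ω) :
    (galoisClosureOver B F).map φ.toAlgHom
      = galoisClosureOver (B.map φ.toAlgHom) (F.map φ.toAlgHom) := by
  rw [galoisClosureOver, IntermediateField.map_iSup, galoisClosureOver]
  apply le_antisymm
  · refine iSup_le fun σ => ?_
    refine le_iSup_of_le ⟨(φ.toAlgHom.comp σ.1).comp φ.symm.toAlgHom, ?_⟩ (le_of_eq ?_)
    · rintro x ⟨b, hb, rfl⟩
      simp [σ.2 b hb]
    · have h : ((φ.toAlgHom.comp σ.1).comp φ.symm.toAlgHom).comp φ.toAlgHom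
          = φ.toAlgHom.comp σ.1 := by ext x; simp
      rw [IntermediateField.map_map, IntermediateField.map_map, h]
  · refine iSup_le fun σ' => ?_
    refine le_iSup_of_le ⟨(φ.symm.toAlgHom.comp σ'.1).comp φ.toAlgHom, fun b hb => ?_⟩
      (le_of_eq ?_)
    · have h : σ'.1 (φ b) = φ b := σ'.2 (φ b) ⟨b, hb, rfl⟩
      simp [h]
    · have h : φ.toAlgHom.comp ((φ.symm.toAlgHom.comp σ'.1).comp φ.toAlgHom)
          = σ'.1.comp φ.toAlgHom := by ext x; simp
      rw [IntermediateField.map_map, IntermediateField.map_map, h]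

theorem map_altTower' (φ : Ω ≃ₐ[k] Ω) (B₁ B₂ F₀ : IntermediateField k Ω) (n : ℕ) :
    (altTower B₁ B₂ F₀ n).map φ.toAlgHom
      = altTower (B₁.map φ.toAlgHom) (B₂.map φ.toAlgHom) (F₀.map φ.toAlgHom) n := by
  induction n with
  | zero => rfl
  | succ n ih =>
    rw [altTower, altTower, map_galoisClosureOver', ih,
      apply_ite (IntermediateField.map φ.toAlgHom)]

end TowerLemmas

/-- field-theoretic form of Lemma `Lift_involution`.
A symmetry `τ` of the correspondence (an involution of `M` over `k` exchanging `L` and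
`K`) lifts to a `k`-algebra automorphism `σ` of `E_∞` with `σ ∘ PQ = PQ ∘ τ`. -/
theorem involution_lifts_to_Einfty
    (k M : Type*) [Field k] [Field M] [Algebra k M]
    -- `M` is a finitely generated field extension of `k` of transcendence degree 1
    (hfg : (⊤ : IntermediateField k M).FG)
    (htr : HasTrdegOne k M)
    -- the two intermediate fields `L` and `K`, with `M/L` and `M/K` finite and separable
    (L K : IntermediateField k M)
    [FiniteDimensional L M] [FiniteDimensional K M]
    [Algebra.IsSeparable L M] [Algebra.IsSeparable K M]
    -- an algebraically closed extension `Ω` of `k` of transcendence degree 1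
    (Ω : Type*) [Field Ω] [Algebra k Ω] [IsAlgClosed Ω]
    (htrΩ : HasTrdegOne k Ω)
    -- a fixed `k`-algebra embedding `PQ : M → Ω`
    (PQ : M →ₐ[k] Ω)
    -- the symmetry: an involution of `M` over `k` with `τ(L) = K`
    (τ : M ≃ₐ[k] M) (hτ2 : ∀ x : M, τ (τ x) = x)
    (hτL : L.map τ.toAlgHom = K) :
    ∃ (hM : ∀ x : M, PQ x ∈ Einfty L K PQ) (σ : Einfty L K PQ ≃ₐ[k] Einfty L K PQ),
      ∀ x : M, (σ ⟨PQ x, hM x⟩ : Ω) = PQ (τ x) := by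
  classical
  obtain ⟨xM, hxM⟩ := htr
  obtain ⟨t, htb⟩ := htrΩ
  set y : Ω := PQ xM with hy
  -- `y` is transcendental over `k`
  have hyind : AlgebraicIndependent k (fun _ : Unit => y) := by
    have hcomp : (algebraMap k Ω).comp (RingHom.id k)
        = (PQ : M →+* Ω).comp (algebraMap k M) := by
      ext c; simp
    exact hxM.1.ringHom_of_comp_eq (RingHom.id k) (PQ : M →+* Ω)
      Function.surjective_id PQ.injective hcomp
  have hymem : y ∈ Algebra.adjoin k (Set.range fun _ : Unit => y) :=
    Algebra.subset_adjoin ⟨(), rfl⟩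
  -- `t` is algebraic over `k(y)`
  have htalg : IsAlgebraic (IntermediateField.adjoin k ({y} : Set Ω)) t := by
    by_cases hcase : Transcendental (Algebra.adjoin k (Set.range fun _ : Unit => y)) t
    · exfalso
      have hopt : AlgebraicIndependent k (fun o : Option Unit => o.elim t fun _ => y) :=
        (hyind.option_iff_transcendental t).2 hcase
      have hrange : Set.range (fun _ : Unit => t)
          ≤ Set.range (fun o : Option Unit => o.elim t fun _ => y) := by
        rintro _ ⟨u, rfl⟩; exact ⟨none, rfl⟩
      have heq := htb.2 _ hopt.to_subtype_range hrange
      have hyt : y = t := by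
        have : y ∈ Set.range (fun _ : Unit => t) := by
          rw [heq]; exact ⟨some (), rfl⟩
        obtain ⟨u, hu⟩ := this
        exact hu.symm
      apply hcase
      rw [← hyt]
      exact isAlgebraic_algebraMap
        (⟨y, hymem⟩ : Algebra.adjoin k (Set.range fun _ : Unit => y))
    · rw [Transcendental, not_not] at hcase
      refine isAlg_subalg_field' _ _ ?_ hcase
      intro z hz
      have hle : Algebra.adjoin k (Set.range fun _ : Unit => y)
          ≤ (IntermediateField.adjoin k ({y} : Set Ω)).toSubalgebra := by
        rw [Set.range_const]
        exact IntermediateField.algebra_adjoin_le_adjoin k {y}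
      exact hle hz
  set F : IntermediateField k Ω := IntermediateField.adjoin k ({y} : Set Ω) with hF
  -- Ω is algebraic over F = k(y)
  have htint : IsIntegral F t := htalg.isIntegral
  haveI : FiniteDimensional F F⟮t⟯ := IntermediateField.adjoin.finiteDimensional htint
  haveI h1 : Algebra.IsAlgebraic F F⟮t⟯ := Algebra.IsAlgebraic.of_finite _ _
  haveI h2 : Algebra.IsAlgebraic F⟮t⟯ Ω := by
    constructor
    intro z
    have hz : IsAlgebraic (IntermediateField.adjoin k (Set.range fun _ : Unit => t)) z :=
      htb.isAlgebraic_field.isAlgebraic z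
    refine isAlg_mono_field' _ _ ?_ hz
    intro w hw
    have hsub : IntermediateField.adjoin k (Set.range fun _ : Unit => t)
        ≤ (IntermediateField.adjoin F ({t} : Set Ω)).restrictScalars k := by
      rw [IntermediateField.adjoin_le_iff]
      rintro _ ⟨u, rfl⟩
      exact IntermediateField.mem_adjoin_simple_self F t
    exact hsub hw
  haveI hFΩ : Algebra.IsAlgebraic F Ω :=
    Algebra.IsAlgebraic.trans F F⟮t⟯ Ω
  -- Ω is algebraic over R = PQ(M)
  set R : IntermediateField k Ω := PQ.fieldRange with hR
  have hFR : F ≤ R := by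
    rw [hF, IntermediateField.adjoin_le_iff]
    rintro _ rfl
    exact ⟨xM, rfl⟩
  haveI hRΩ : Algebra.IsAlgebraic R Ω := by
    constructor
    intro z
    exact isAlg_mono_field' F R (fun w hw => hFR hw) (hFΩ.isAlgebraic z)
  -- the equivalence M ≃ R
  let e : M ≃ₐ[k] R := show M ≃ₐ[k] PQ.fieldRange from AlgEquiv.ofInjectiveField PQ
  have he : ∀ m : M, (e m : Ω) = PQ m := fun m => rfl
  -- extend (PQ ∘ τ ∘ e⁻¹ : R → Ω) to φ : Ω → Ω
  let g : R →ₐ[k] Ω := (PQ.comp τ.toAlgHom).comp e.symm.toAlgHom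
  obtain ⟨φ, hφg⟩ := IsAlgClosed.surjective_restrictDomain_of_isAlgebraic
    (K := k) (L := R) (E := Ω) (M := Ω) g
  have hφ : ∀ m : M, φ (PQ m) = PQ (τ m) := by
    intro m
    have h1 : φ (algebraMap R Ω (e m)) = g (e m) := by
      rw [← hφg]; rfl
    have h2 : algebraMap R Ω (e m) = PQ m := he m
    have h3 : g (e m) = PQ (τ (e.symm (e m))) := rfl
    rw [h2] at h1
    rw [h1, h3, AlgEquiv.symm_apply_apply]
  -- φ is bijective
  have hψcomm : ∀ r : R, (φ.comp φ) (algebraMap R Ω r) = algebraMap R Ω r := by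
    intro r
    obtain ⟨m, hm⟩ := r.2
    have h0 : algebraMap R Ω r = PQ m := hm.symm
    rw [h0]
    simp only [AlgHom.coe_comp, Function.comp_apply, hφ m, hφ (τ m), hτ2 m]
  let ψR : Ω →ₐ[R] Ω := { (φ.comp φ).toRingHom with commutes' := hψcomm }
  haveI : NoZeroSMulDivisors R Ω :=
    inferInstance
  have hbij : Function.Bijective ψR := Algebra.IsAlgebraic.algHom_bijective ψR
  have hsurj : Function.Surjective φ := by
    intro z
    obtain ⟨w, hw⟩ := hbij.2 z
    exact ⟨φ w, hw⟩
  let φe : Ω ≃ₐ[k] Ω := AlgEquiv.ofBijective φ ⟨φ.toRingHom.injective, hsurj⟩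
  have hφe : ∀ m : M, φe (PQ m) = PQ (τ m) := hφ
  -- τ exchanges K and L
  have hτK : K.map τ.toAlgHom = L := by
    rw [← hτL, IntermediateField.map_map]
    have : τ.toAlgHom.comp τ.toAlgHom = AlgHom.id k M := by
      ext m; simpa using hτ2 m
    rw [this]
    exact IntermediateField.map_id L
  have hmemK : ∀ m : M, m ∈ K → τ m ∈ L := fun m hm => hτK ▸ ⟨m, hm, rfl⟩
  have hmemL : ∀ m : M, m ∈ L → τ m ∈ K := fun m hm => hτL ▸ ⟨m, hm, rfl⟩
  -- φe swaps the base fields and preserves F₀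
  have hmapB₁ : ((PQ.comp K.val).fieldRange).map φe.toAlgHom = (PQ.comp L.val).fieldRange := by
    rw [AlgHom.map_fieldRange]
    apply le_antisymm
    · rintro z ⟨x, rfl⟩
      refine ⟨⟨τ x.1, hmemK x.1 x.2⟩, ?_⟩
      show PQ (τ x.1) = φe.toAlgHom ((PQ.comp K.val) x)
      exact (hφe x.1).symm
    · rintro z ⟨w, rfl⟩
      refine ⟨⟨τ w.1, hmemL w.1 w.2⟩, ?_⟩
      show φe.toAlgHom (PQ (τ w.1)) = (PQ.comp L.val) w
      show φe (PQ (τ w.1)) = PQ w.1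
      rw [hφe (τ w.1), hτ2 w.1]
  have hmapB₂ : ((PQ.comp L.val).fieldRange).map φe.toAlgHom = (PQ.comp K.val).fieldRange := by
    rw [AlgHom.map_fieldRange]
    apply le_antisymm
    · rintro z ⟨x, rfl⟩
      refine ⟨⟨τ x.1, hmemL x.1 x.2⟩, ?_⟩
      show PQ (τ x.1) = φe.toAlgHom ((PQ.comp L.val) x)
      exact (hφe x.1).symm
    · rintro z ⟨w, rfl⟩
      refine ⟨⟨τ w.1, hmemK w.1 w.2⟩, ?_⟩
      show φe (PQ (τ w.1)) = PQ w.1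
      rw [hφe (τ w.1), hτ2 w.1]
  have hmapF₀ : (PQ.fieldRange).map φe.toAlgHom = PQ.fieldRange := by
    rw [AlgHom.map_fieldRange]
    apply le_antisymm
    · rintro z ⟨m, rfl⟩
      exact ⟨τ m, (hφe m).symm⟩
    · rintro z ⟨m, rfl⟩
      refine ⟨τ m, ?_⟩
      show φe (PQ (τ m)) = PQ m
      rw [hφe (τ m), hτ2 m]
  have hterm : ∀ n, (altTower (PQ.comp K.val).fieldRange (PQ.comp L.val).fieldRange
        PQ.fieldRange (n + 1)).map φe.toAlgHom
      = altTower (PQ.comp L.val).fieldRange (PQ.comp K.val).fieldRange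
        PQ.fieldRange (n + 1) := by
    intro n
    rw [map_altTower', hmapB₁, hmapB₂, hmapF₀]
  have hmapE : (Einfty L K PQ).map φe.toAlgHom = Einfty L K PQ := by
    rw [Einfty, IntermediateField.map_iSup]
    apply le_antisymm
    · refine iSup_le fun n => ?_
      rw [hterm n]
      exact le_trans (altTower_swap_le' _ _ _ (n + 1))
        (le_iSup (fun m => altTower (PQ.comp K.val).fieldRange (PQ.comp L.val).fieldRange
          PQ.fieldRange (m + 1)) (n + 1))
    · refine iSup_le fun n => ?_
      refine le_trans (altTower_swap_le' _ _ _ (n + 1)) ?_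
      exact le_trans (le_of_eq (hterm (n + 1)).symm)
        (le_iSup (fun m => (altTower (PQ.comp K.val).fieldRange (PQ.comp L.val).fieldRange
          PQ.fieldRange (m + 1)).map φe.toAlgHom) (n + 1))
  have hM : ∀ m : M, PQ m ∈ Einfty L K PQ := by
    intro m
    have h0 : PQ m ∈ altTower (PQ.comp K.val).fieldRange (PQ.comp L.val).fieldRange
        PQ.fieldRange 0 := ⟨m, rfl⟩
    have h1 : altTower (PQ.comp K.val).fieldRange (PQ.comp L.val).fieldRange
          PQ.fieldRange 0
        ≤ altTower (PQ.comp K.val).fieldRange (PQ.comp L.val).fieldRange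
          PQ.fieldRange 1 := by
      conv_rhs => rw [altTower]
      exact le_galoisClosureOver' _ _
    rw [Einfty]
    exact le_iSup (fun n => altTower (PQ.comp K.val).fieldRange (PQ.comp L.val).fieldRange
      PQ.fieldRange (n + 1)) 0 (h1 h0)
  refine ⟨hM, (IntermediateField.intermediateFieldMap φe (Einfty L K PQ)).trans
    (IntermediateField.equivOfEq hmapE), ?_⟩
  intro x
  show φe (PQ x) = PQ (τ x)
  exact hφe x
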